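/- If two variables a and b of a propositional formula φ have equivalent logical influence, a ≡ b, then their influence weights are equal: IW_φ(a) = IW_φ(b). -/

import Mathlib

/-- Propositional formulas over a set `V` of variables, built from variables,
the constants ⊤ (`tru`) and ⊥ (`fls`), negation, conjunction and disjunction. -/
inductive PropForm (V : Type) : Type where
  | tru : PropForm V
  | fls : PropForm V
  | var : V → PropForm V
  | neg : PropForm V → PropForm V
  | conj : PropForm V → PropForm V → PropForm V
  | disj : PropForm V → PropForm V → PropForm V
  deriving DecidableEq

/-- The three-valued truth domain B₃ = {⊤, ⊥, ?}. -/
inductive B3 : Type where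
  | top : B3
  | bot : B3
  | unk : B3
  deriving DecidableEq

instance instFintypeB3 : Fintype B3 :=
  ⟨{B3.top, B3.bot, B3.unk}, fun x => by cases x <;> simp⟩

namespace PropForm

variable {V : Type} [DecidableEq V]

/-- Simplifying negation: ¬⊤ = ⊥, ¬⊥ = ⊤. -/
def sneg : PropForm V → PropForm V
  | tru => fls
  | fls => tru
  | φ => neg φ

/-- Simplifying conjunction: ⊤∧ψ = ψ, ⊥∧ψ = ⊥ (and symmetrically). -/
def sconj : PropForm V → PropForm V → PropForm V
  | tru, ψ => ψ
  | fls, _ => fls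
  | φ, tru => φ
  | _, fls => fls
  | φ, ψ => conj φ ψ

/-- Simplifying disjunction: ⊤∨ψ = ⊤, ⊥∨ψ = ψ (and symmetrically). -/
def sdisj : PropForm V → PropForm V → PropForm V
  | tru, _ => tru
  | fls, ψ => ψ
  | _, tru => tru
  | φ, fls => φ
  | φ, ψ => disj φ ψ

/-- `prog(φ, σ)`: substitute the definite truth values (⊤ or ⊥) assigned by the
three-valued assignment `σ` and apply the standard Boolean simplification rules,
leaving variables with value ? untouched. -/
def progAssign (σ : V → B3) : PropForm V → PropForm V
  | tru => tru
  | fls => fls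
  | var v =>
      match σ v with
      | B3.top => tru
      | B3.bot => fls
      | B3.unk => var v
  | neg φ => sneg (progAssign σ φ)
  | conj φ ψ => sconj (progAssign σ φ) (progAssign σ ψ)
  | disj φ ψ => sdisj (progAssign σ φ) (progAssign σ ψ)

/-- `prog(φ, a = v)` for a definite truth value `v` (`true` = ⊤, `false` = ⊥):
the simplification under the assignment setting `a` to `v` and all other
variables to ?. -/
def progVar (φ : PropForm V) (a : V) (v : Bool) : PropForm V :=
  progAssign (fun x => if x = a then (if v then B3.top else B3.bot) else B3.unk) φ

/-- `rename(ψ, a, b)`: replace every occurrence of the variable `a` by `b`. -/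
def rename : PropForm V → V → V → PropForm V
  | tru, _, _ => tru
  | fls, _, _ => fls
  | var v, a, b => var (if v = a then b else v)
  | neg φ, a, b => neg (rename φ a b)
  | conj φ ψ, a, b => conj (rename φ a b) (rename ψ a b)
  | disj φ ψ, a, b => disj (rename φ a b) (rename ψ a b)

/-- The set of variables occurring in a formula. -/
def vars : PropForm V → Finset V
  | tru => ∅
  | fls => ∅
  | var v => {v}
  | neg φ => vars φ
  | conj φ ψ => vars φ ∪ vars ψ
  | disj φ ψ => vars φ ∪ vars ψ

/-- `a ≡ b`: the variables `a` and `b` have equivalent logical influence on the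
outcome of `φ`, i.e. `prog(φ, a = ⊥) = rename(prog(φ, b = ⊥), a, b)` and
`prog(φ, a = ⊤) = rename(prog(φ, b = ⊤), a, b)` (syntactic equality). -/
def EquivInfluence (φ : PropForm V) (a b : V) : Prop :=
  progVar φ a false = rename (progVar φ b false) a b ∧
  progVar φ a true = rename (progVar φ b true) a b

/-- The influence weight `IW_φ(a) = f_a / C_{a = ?}`, where `C_{a = ?}` is the
number of three-valued assignments `σ` with `σ a = ?` and `f_a` is the number of
such assignments for which `a` occurs in `prog(φ, σ)`. -/
noncomputable def IW [Fintype V] (φ : PropForm V) (a : V) : ℚ :=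
  (Fintype.card {σ : V → B3 // σ a = B3.unk ∧ a ∈ vars (progAssign σ φ)} : ℚ) /
  (Fintype.card {σ : V → B3 // σ a = B3.unk} : ℚ)

set_option linter.unusedSectionVars false
lemma sconj_tru_right (X : PropForm V) : sconj X tru = X := by cases X <;> rfl
lemma sconj_fls_right (X : PropForm V) : sconj X fls = fls := by cases X <;> rfl
lemma sdisj_tru_right (X : PropForm V) : sdisj X tru = tru := by cases X <;> rfl
lemma sdisj_fls_right (X : PropForm V) : sdisj X fls = X := by cases X <;> rfl

lemma sconj_tru_left (Y : PropForm V) : sconj tru Y = Y := by cases Y <;> rfl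
lemma sconj_fls_left (Y : PropForm V) : sconj fls Y = fls := by cases Y <;> rfl
lemma sdisj_tru_left (Y : PropForm V) : sdisj tru Y = tru := by cases Y <;> rfl
lemma sdisj_fls_left (Y : PropForm V) : sdisj fls Y = Y := by cases Y <;> rfl

lemma vars_sneg (X : PropForm V) : vars (sneg X) = vars X := by
  cases X <;> rfl

lemma vars_sconj_subset (X Y : PropForm V) : vars (sconj X Y) ⊆ vars X ∪ vars Y := by
  cases X <;> cases Y <;> simp [sconj, vars, Finset.subset_union_left, Finset.subset_union_right]

lemma vars_sdisj_subset (X Y : PropForm V) : vars (sdisj X Y) ⊆ vars X ∪ vars Y := by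
  cases X <;> cases Y <;> simp [sdisj, vars, Finset.subset_union_left, Finset.subset_union_right]

lemma progAssign_sneg (σ : V → B3) (X : PropForm V) :
    progAssign σ (sneg X) = sneg (progAssign σ X) := by
  cases X <;> rfl

lemma progAssign_sconj (σ : V → B3) (X Y : PropForm V) :
    progAssign σ (sconj X Y) = sconj (progAssign σ X) (progAssign σ Y) := by
  cases X <;> cases Y <;>
    first
      | rfl
      | (simp only [progAssign, sconj_tru_left, sconj_fls_left, sconj_tru_right, sconj_fls_right]) | (simp [progAssign, sconj_tru_left, sconj_fls_left, sconj_tru_right, sconj_fls_right])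

lemma progAssign_sdisj (σ : V → B3) (X Y : PropForm V) :
    progAssign σ (sdisj X Y) = sdisj (progAssign σ X) (progAssign σ Y) := by
  cases X <;> cases Y <;>
    first
      | rfl
      | (simp only [progAssign, sdisj_tru_left, sdisj_fls_left, sdisj_tru_right, sdisj_fls_right]) | (simp [progAssign, sdisj_tru_left, sdisj_fls_left, sdisj_tru_right, sdisj_fls_right])

lemma rename_sneg (X : PropForm V) (a b : V) :
    rename (sneg X) a b = sneg (rename X a b) := by
  cases X <;> rfl

lemma rename_sconj (X Y : PropForm V) (a b : V) :
    rename (sconj X Y) a b = sconj (rename X a b) (rename Y a b) := by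
  cases X <;> cases Y <;> rfl

lemma rename_sdisj (X Y : PropForm V) (a b : V) :
    rename (sdisj X Y) a b = sdisj (rename X a b) (rename Y a b) := by
  cases X <;> cases Y <;> rfl

lemma vars_progAssign_subset (σ : V → B3) (φ : PropForm V) :
    vars (progAssign σ φ) ⊆ vars φ := by
  induction φ with
  | tru => simp [progAssign, vars]
  | fls => simp [progAssign, vars]
  | var v =>
      cases h : σ v <;> simp [progAssign, h, vars]
  | neg φ ih => simpa [progAssign, vars_sneg, vars] using ih
  | conj φ ψ ih1 ih2 =>
      refine (vars_sconj_subset _ _).trans ?_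
      exact Finset.union_subset_union ih1 ih2
  | disj φ ψ ih1 ih2 =>
      refine (vars_sdisj_subset _ _).trans ?_
      exact Finset.union_subset_union ih1 ih2

lemma eq_unk_of_mem_vars_progAssign {σ : V → B3} {φ : PropForm V} {c : V}
    (h : c ∈ vars (progAssign σ φ)) : σ c = B3.unk := by
  induction φ with
  | tru => simp [progAssign, vars] at h
  | fls => simp [progAssign, vars] at h
  | var v =>
      cases hv : σ v <;> simp [progAssign, hv, vars] at h
      subst h; exact hv
  | neg φ ih => rw [progAssign, vars_sneg] at h; exact ih h
  | conj φ ψ ih1 ih2 =>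
      rw [progAssign] at h
      rcases Finset.mem_union.1 (vars_sconj_subset _ _ h) with h | h
      · exact ih1 h
      · exact ih2 h
  | disj φ ψ ih1 ih2 =>
      rw [progAssign] at h
      rcases Finset.mem_union.1 (vars_sdisj_subset _ _ h) with h | h
      · exact ih1 h
      · exact ih2 h

lemma progAssign_comp (σ τ : V → B3) (φ : PropForm V) :
    progAssign σ (progAssign τ φ) =
      progAssign (fun x => match τ x with | B3.unk => σ x | v => v) φ := by
  induction φ with
  | tru => rfl
  | fls => rfl
  | var v => cases hv : τ v <;> simp [progAssign, hv]
  | neg φ ih => rw [progAssign, progAssign_sneg, ih]; rfl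
  | conj φ ψ ih1 ih2 => rw [progAssign, progAssign_sconj, ih1, ih2]; rfl
  | disj φ ψ ih1 ih2 => rw [progAssign, progAssign_sdisj, ih1, ih2]; rfl

lemma progAssign_congr {σ τ : V → B3} {φ : PropForm V}
    (h : ∀ x ∈ vars φ, σ x = τ x) : progAssign σ φ = progAssign τ φ := by
  induction φ with
  | tru => rfl
  | fls => rfl
  | var v => rw [progAssign, progAssign, h v (by simp [vars])]
  | neg φ ih => rw [progAssign, progAssign, ih h]
  | conj φ ψ ih1 ih2 =>
      rw [progAssign, progAssign,
        ih1 (fun x hx => h x (by simp [vars, hx])),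
        ih2 (fun x hx => h x (by simp [vars, hx]))]
  | disj φ ψ ih1 ih2 =>
      rw [progAssign, progAssign,
        ih1 (fun x hx => h x (by simp [vars, hx])),
        ih2 (fun x hx => h x (by simp [vars, hx]))]

lemma progAssign_rename (τ : V → B3) (ψ : PropForm V) (a b : V) :
    progAssign τ (rename ψ a b) =
      rename (progAssign (fun x => if x = a then τ b else τ x) ψ) a b := by
  induction ψ with
  | tru => rfl
  | fls => rfl
  | var v =>
      by_cases hv : v = a
      · subst hv
        simp only [rename, progAssign, if_pos rfl]
        cases h : τ b <;> simp [progAssign, rename, h]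
      · simp only [rename, progAssign, if_neg hv]
        cases τ v <;> simp [rename, hv]
  | neg φ ih => rw [rename, progAssign, progAssign, ih, rename_sneg]
  | conj φ ψ ih1 ih2 =>
      rw [rename, progAssign, progAssign, ih1, ih2, rename_sconj]
  | disj φ ψ ih1 ih2 =>
      rw [rename, progAssign, progAssign, ih1, ih2, rename_sdisj]

lemma mem_vars_rename_right {X : PropForm V} {a b : V} :
    b ∈ vars (rename X a b) ↔ a ∈ vars X ∨ b ∈ vars X := by
  induction X with
  | tru => simp [rename, vars]
  | fls => simp [rename, vars]
  | var v =>
      simp only [rename, vars, Finset.mem_singleton]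
      by_cases hv : v = a
      · subst hv; simp
      · rw [if_neg hv]
        constructor
        · exact Or.inr
        · rintro (h | h)
          · exact absurd h.symm hv
          · exact h
  | neg φ ih => simpa [rename, vars] using ih
  | conj φ ψ ih1 ih2 => simp [rename, vars, ih1, ih2]; tauto
  | disj φ ψ ih1 ih2 => simp [rename, vars, ih1, ih2]; tauto

lemma sconj_eq_conj {X Y : PropForm V} (h1 : X ≠ tru) (h2 : X ≠ fls)
    (h3 : Y ≠ tru) (h4 : Y ≠ fls) : sconj X Y = conj X Y := by
  cases X <;> cases Y <;> first | rfl | simp_all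

lemma sdisj_eq_disj {X Y : PropForm V} (h1 : X ≠ tru) (h2 : X ≠ fls)
    (h3 : Y ≠ tru) (h4 : Y ≠ fls) : sdisj X Y = disj X Y := by
  cases X <;> cases Y <;> first | rfl | simp_all

lemma progAssign_update {σ : V → B3} {a : V} (w : B3) (hσ : σ a = B3.unk)
    {φ : PropForm V} (h : a ∉ vars (progAssign σ φ)) :
    progAssign (fun x => if x = a then w else σ x) φ = progAssign σ φ := by
  induction φ with
  | tru => rfl
  | fls => rfl
  | var v =>
      by_cases hva : v = a
      · subst hva
        rw [progAssign, hσ] at h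
        simp [vars] at h
      · simp [progAssign, if_neg hva]
  | neg φ ih =>
      rw [progAssign, vars_sneg] at h
      rw [progAssign, ih h, progAssign]
  | conj φ ψ ih1 ih2 =>
      rw [progAssign] at h
      rw [progAssign, progAssign]
      by_cases h1 : progAssign σ φ = tru
      · rw [h1, sconj_tru_left] at h
        rw [ih1 (by rw [h1]; simp [vars]), ih2 h]
      · by_cases h2 : progAssign σ φ = fls
        · rw [ih1 (by rw [h2]; simp [vars]), h2]; simp only [sconj_fls_left]
        · by_cases h3 : progAssign σ ψ = fls
          · rw [ih2 (by rw [h3]; simp [vars]), h3]; simp only [sconj_fls_right]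
          · by_cases h4 : progAssign σ ψ = tru
            · rw [h4, sconj_tru_right] at h
              rw [ih2 (by rw [h4]; simp [vars]), ih1 h]
            · rw [sconj_eq_conj h1 h2 h4 h3, vars, Finset.mem_union] at h
              push_neg at h
              rw [ih1 h.1, ih2 h.2]
  | disj φ ψ ih1 ih2 =>
      rw [progAssign] at h
      rw [progAssign, progAssign]
      by_cases h1 : progAssign σ φ = fls
      · rw [h1, sdisj_fls_left] at h
        rw [ih1 (by rw [h1]; simp [vars]), ih2 h]
      · by_cases h2 : progAssign σ φ = tru
        · rw [ih1 (by rw [h2]; simp [vars]), h2]; simp only [sdisj_tru_left]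
        · by_cases h3 : progAssign σ ψ = tru
          · rw [ih2 (by rw [h3]; simp [vars]), h3]; simp only [sdisj_tru_right]
          · by_cases h4 : progAssign σ ψ = fls
            · rw [h4, sdisj_fls_right] at h
              rw [ih2 (by rw [h4]; simp [vars]), ih1 h]
            · rw [sdisj_eq_disj h2 h1 h3 h4, vars, Finset.mem_union] at h
              push_neg at h
              rw [ih1 h.1, ih2 h.2]

/-- Composing `progVar` after with `σ`. -/
lemma progVar_progAssign (σ : V → B3) (φ : PropForm V) (a : V) (v : Bool) :
    progAssign σ (progVar φ a v) =
      progAssign (fun x => if x = a then (if v then B3.top else B3.bot) else σ x) φ := by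
  rw [progVar, progAssign_comp]
  congr 1
  funext x
  by_cases hx : x = a <;> cases v <;> simp [hx]

/-- Composing a single-variable assignment after `σ`. -/
lemma progAssign_single (σ : V → B3) (φ : PropForm V) (a : V) (w : B3)
    (hσ : σ a = B3.unk) :
    progAssign (fun x => if x = a then w else B3.unk) (progAssign σ φ)
      = progAssign (fun x => if x = a then w else σ x) φ := by
  rw [progAssign_comp]
  congr 1
  funext x
  by_cases hx : x = a
  · subst hx; simp [hσ]
  · cases hx2 : σ x <;> simp [hx, hx2]

/-- Definite case: if `σ b` is a definite value, swapping `a` and `b` in `σ`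
turns occurrence of `a` into occurrence of `b`. -/
lemma key_def {φ : PropForm V} {a b : V} (hab : a ≠ b) (σ : V → B3)
    (hσ : σ a = B3.unk) (v : Bool)
    (hb : σ b = (if v then B3.top else B3.bot))
    (hr : progVar φ a v = rename (progVar φ b v) a b) :
    (b ∈ vars (progAssign (σ ∘ Equiv.swap a b) φ) ↔ a ∈ vars (progAssign σ φ)) := by
  set τ : V → B3 := σ ∘ Equiv.swap a b with hτ
  have hτa : τ a = σ b := by simp [hτ, Equiv.swap_apply_left]
  have hτb : τ b = σ a := by simp [hτ, Equiv.swap_apply_right]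
  set ψ : PropForm V := progVar φ b v with hψ
  -- b does not occur in ψ
  have hbψ : b ∉ vars ψ := by
    intro hm
    have := eq_unk_of_mem_vars_progAssign hm
    simp at this
    cases v <;> simp_all
  -- X = progAssign σ φ = progAssign σ ψ
  have hX : progAssign σ φ = progAssign σ ψ := by
    rw [hψ, progVar_progAssign]
    apply progAssign_congr
    intro x _
    by_cases hx : x = b
    · subst hx; rw [if_pos rfl, hb]
    · rw [if_neg hx]
  -- Y = progAssign τ φ = rename X a b
  have hY : progAssign τ φ = rename (progAssign σ φ) a b := by
    have h1 : progAssign τ φ = progAssign τ (progVar φ a v) := by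
      rw [progVar_progAssign]
      apply progAssign_congr
      intro x _
      by_cases hx : x = a
      · subst hx; rw [if_pos rfl, hτa, hb]
      · rw [if_neg hx]
    rw [h1, hr, progAssign_rename, hX]
    congr 1
    apply progAssign_congr
    intro x hx
    by_cases hxa : x = a
    · subst hxa; rw [if_pos rfl, hτb, hσ]
    · rw [if_neg hxa]
      have hxb : x ≠ b := fun hh => hbψ (hh ▸ hx)
      simp [hτ, Equiv.swap_apply_of_ne_of_ne hxa hxb]
  -- b is not in X
  have hbX : b ∉ vars (progAssign σ φ) := by
    rw [hX]
    exact fun hm => hbψ (vars_progAssign_subset σ ψ hm)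
  rw [hY, mem_vars_rename_right]
  constructor
  · rintro (h' | h')
    · exact h'
    · exact absurd h' hbX
  · exact Or.inl


lemma progVar_progAssign_top (σ : V → B3) (φ : PropForm V) (a : V) :
    progAssign σ (progVar φ a true) =
      progAssign (fun x => if x = a then B3.top else σ x) φ := by
  simpa using progVar_progAssign σ φ a true

/-- Unknown case: if `σ a = σ b = ?`, then `a` occurs iff `b` occurs. -/
lemma key_unk {φ : PropForm V} {a b : V} (h : EquivInfluence φ a b) (hab : a ≠ b)
    (σ : V → B3) (hσ : σ a = B3.unk) (hb : σ b = B3.unk) :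
    (a ∈ vars (progAssign σ φ) ↔ b ∈ vars (progAssign σ φ)) := by
  set A : PropForm V := progAssign (fun x => if x = a then B3.top else σ x) φ with hA
  set B : PropForm V := progAssign (fun x => if x = b then B3.top else σ x) φ with hB
  have eA : A = rename B a b := by
    rw [hA, ← progVar_progAssign_top σ φ a, h.2, progAssign_rename, hB,
      ← progVar_progAssign_top σ φ b]
    congr 1
    apply progAssign_congr
    intro x _
    by_cases hx : x = a
    · subst hx; rw [if_pos rfl, hb, hσ]
    · rw [if_neg hx]
  have hBv : b ∉ vars B := by
    intro hm
    have := eq_unk_of_mem_vars_progAssign hm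
    simp at this
  have sA : vars A ⊆ vars (progAssign σ φ) := by
    rw [hA, ← progAssign_single σ φ a B3.top hσ]
    exact vars_progAssign_subset _ _
  have sB : vars B ⊆ vars (progAssign σ φ) := by
    rw [hB, ← progAssign_single σ φ b B3.top hb]
    exact vars_progAssign_subset _ _
  constructor
  · intro haX
    by_contra hbX
    have hBX : B = progAssign σ φ := progAssign_update B3.top hb hbX
    have : b ∈ vars A := by
      rw [eA, hBX]
      exact mem_vars_rename_right.2 (Or.inl haX)
    exact hbX (sA this)
  · intro hbX
    by_contra haX
    have hAX : A = progAssign σ φ := progAssign_update B3.top hσ haX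
    have : b ∈ vars (rename B a b) := by rw [← eA, hAX]; exact hbX
    rcases mem_vars_rename_right.1 this with h' | h'
    · exact haX (sB h')
    · exact hBv h'

/-- The key swapping lemma. -/
lemma key {φ : PropForm V} {a b : V} (h : EquivInfluence φ a b) (hab : a ≠ b)
    (σ : V → B3) (hσ : σ a = B3.unk) :
    (a ∈ vars (progAssign σ φ) ↔ b ∈ vars (progAssign (σ ∘ Equiv.swap a b) φ)) := by
  cases hb : σ b with
  | top =>
      exact (key_def hab σ hσ true (by simp [hb]) h.2).symm
  | bot =>
      exact (key_def hab σ hσ false (by simp [hb]) h.1).symm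
  | unk =>
      have hτσ : σ ∘ Equiv.swap a b = σ := by
        funext x
        by_cases hxa : x = a
        · subst hxa; simp [Equiv.swap_apply_left, hb, hσ]
        · by_cases hxb : x = b
          · subst hxb; simp [Equiv.swap_apply_right, hb, hσ]
          · simp [Equiv.swap_apply_of_ne_of_ne hxa hxb]
      rw [hτσ]
      exact key_unk h hab σ hσ hb
end PropForm

open PropForm in
/-- If a ≡ b (equivalent logical influence) then IW_φ(a) = IW_φ(b). -/
theorem IW_eq_of_equivInfluence {V : Type} [DecidableEq V] [Fintype V]
    (φ : PropForm V) (a b : V) (h : EquivInfluence φ a b) :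
    IW φ a = IW φ b := by
  by_cases hab : a = b
  · subst hab; rfl
  · have swap_swap : ∀ σ : V → B3, (σ ∘ Equiv.swap a b) ∘ Equiv.swap a b = σ := by
      intro σ; funext x; simp [Function.comp, Equiv.swap_apply_self]
    have e1 : {σ : V → B3 // σ a = B3.unk ∧ a ∈ vars (progAssign σ φ)} ≃
        {σ : V → B3 // σ b = B3.unk ∧ b ∈ vars (progAssign σ φ)} :=
      { toFun := fun s => ⟨s.1 ∘ Equiv.swap a b,
          ⟨by show s.1 (Equiv.swap a b b) = B3.unk
              rw [Equiv.swap_apply_right]; exact s.2.1,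
           (key h hab s.1 s.2.1).1 s.2.2⟩⟩
        invFun := fun s => ⟨s.1 ∘ Equiv.swap a b,
          ⟨by show s.1 (Equiv.swap a b a) = B3.unk
              rw [Equiv.swap_apply_left]; exact s.2.1,
           by
            have hσ : (s.1 ∘ Equiv.swap a b) a = B3.unk := by
              show s.1 (Equiv.swap a b a) = B3.unk
              rw [Equiv.swap_apply_left]; exact s.2.1
            have := (key h hab (s.1 ∘ Equiv.swap a b) hσ).2
            rw [swap_swap s.1] at this
            exact this s.2.2⟩⟩
        left_inv := fun s => Subtype.ext (swap_swap s.1)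
        right_inv := fun s => Subtype.ext (swap_swap s.1) }
    have e2 : {σ : V → B3 // σ a = B3.unk} ≃ {σ : V → B3 // σ b = B3.unk} :=
      { toFun := fun s => ⟨s.1 ∘ Equiv.swap a b,
          by show s.1 (Equiv.swap a b b) = B3.unk
             rw [Equiv.swap_apply_right]; exact s.2⟩
        invFun := fun s => ⟨s.1 ∘ Equiv.swap a b,
          by show s.1 (Equiv.swap a b a) = B3.unk
             rw [Equiv.swap_apply_left]; exact s.2⟩
        left_inv := fun s => Subtype.ext (swap_swap s.1)
        right_inv := fun s => Subtype.ext (swap_swap s.1) }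
    unfold IW
    rw [Fintype.card_congr e1, Fintype.card_congr e2]
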